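/- Sharpness of the ensemble decomposes via Jensen: the ensemble sharpness gap satisfies sup_{‖θ'_ens−θ_ens‖≤ρ} L_S(θ'_ens) − L_S(θ_ens) ≤ (1/m)∑_i sup_{‖θ_i'−θ_i‖≤ρ} L_S(θ_i') − L_S(θ_ens), assuming ℓ(·,y) is convex for every y. -/

import Mathlib

open Finset

set_option maxHeartbeats 1000000

lemma pilp2_apply_norm_le {ι : Type*} [Fintype ι] {β : ι → Type*}
    [∀ i, SeminormedAddCommGroup (β i)] (x : PiLp 2 β) (i : ι) : ‖x i‖ ≤ ‖x‖ := by
  have h2 : ‖x i‖ ^ 2 ≤ ‖x‖ ^ 2 := by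
    rw [PiLp.norm_sq_eq_of_L2]
    exact Finset.single_le_sum (f := fun j => ‖x j‖ ^ 2) (fun j _ => sq_nonneg _) (mem_univ i)
  calc ‖x i‖ = Real.sqrt (‖x i‖ ^ 2) := (Real.sqrt_sq (norm_nonneg _)).symm
    _ ≤ Real.sqrt (‖x‖ ^ 2) := Real.sqrt_le_sqrt h2
    _ = ‖x‖ := Real.sqrt_sq (norm_nonneg _)

theorem ensemble_sharpness_gap_decomposes
    {M m N : ℕ} [NeZero m] [NeZero N] {X Y : Type*} {d : Fin m → ℕ}
    (f : ∀ i : Fin m, EuclideanSpace ℝ (Fin (d i)) → X → (Fin M → ℝ))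
    (xs : Fin N → X) (ys : Fin N → Y)
    (ℓ : (Fin M → ℝ) → Y → ℝ)
    (hconv : ∀ y : Y, ConvexOn ℝ Set.univ (fun π => ℓ π y))
    (C : ℝ) (hbdd : ∀ π y, ℓ π y ≤ C)
    (θ : PiLp 2 (fun i : Fin m => EuclideanSpace ℝ (Fin (d i))))
    (ρ : ℝ) (hρ : 0 < ρ) :
    sSup ((fun θ' : PiLp 2 (fun i : Fin m => EuclideanSpace ℝ (Fin (d i))) =>
        (1 / (N : ℝ)) * ∑ j : Fin N,
          ℓ ((1 / (m : ℝ)) • ∑ i : Fin m, f i (θ' i) (xs j)) (ys j)) ''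
        Metric.closedBall θ ρ)
      - (1 / (N : ℝ)) * ∑ j : Fin N,
          ℓ ((1 / (m : ℝ)) • ∑ i : Fin m, f i (θ i) (xs j)) (ys j)
      ≤ (1 / (m : ℝ)) * (∑ i : Fin m,
          sSup ((fun θi' : EuclideanSpace ℝ (Fin (d i)) =>
            (1 / (N : ℝ)) * ∑ j : Fin N, ℓ (f i θi' (xs j)) (ys j)) ''
            Metric.closedBall (θ i) ρ))
        - (1 / (N : ℝ)) * ∑ j : Fin N,
            ℓ ((1 / (m : ℝ)) • ∑ i : Fin m, f i (θ i) (xs j)) (ys j) := by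
  have hm : (0:ℝ) < m := Nat.cast_pos.mpr (Nat.pos_of_ne_zero (NeZero.ne m))
  have hN : (0:ℝ) < N := Nat.cast_pos.mpr (Nat.pos_of_ne_zero (NeZero.ne N))
  gcongr
  -- bounded above lemma for each component image
  have hbddA : ∀ i : Fin m, BddAbove ((fun θi' : EuclideanSpace ℝ (Fin (d i)) =>
      (1 / (N : ℝ)) * ∑ j : Fin N, ℓ (f i θi' (xs j)) (ys j)) ''
      Metric.closedBall (θ i) ρ) := by
    intro i
    refine ⟨C, ?_⟩
    rintro _ ⟨θi', -, rfl⟩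
    have : ∑ j : Fin N, ℓ (f i θi' (xs j)) (ys j) ≤ ∑ _j : Fin N, C :=
      Finset.sum_le_sum fun j _ => hbdd _ _
    calc (1 / (N : ℝ)) * ∑ j : Fin N, ℓ (f i θi' (xs j)) (ys j)
        ≤ (1 / (N : ℝ)) * (N * C) := by
          rw [mul_le_mul_iff_right₀ (by positivity)]
          simpa using this
      _ = C := by field_simp
  refine csSup_le ⟨_, ⟨θ, Metric.mem_closedBall_self hρ.le, rfl⟩⟩ ?_
  rintro _ ⟨θ', hθ', rfl⟩
  have hcomp : ∀ i : Fin m, θ' i ∈ Metric.closedBall (θ i) ρ := by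
    intro i
    rw [Metric.mem_closedBall] at hθ' ⊢
    refine le_trans ?_ hθ'
    calc dist (θ' i) (θ i) = ‖(θ' - θ) i‖ := by
          simp [dist_eq_norm, PiLp.sub_apply]
      _ ≤ ‖θ' - θ‖ := pilp2_apply_norm_le _ i
      _ = dist θ' θ := (dist_eq_norm _ _).symm
  -- Jensen on each j
  have hjensen : ∀ j : Fin N,
      ℓ ((1 / (m : ℝ)) • ∑ i : Fin m, f i (θ' i) (xs j)) (ys j)
        ≤ ∑ i : Fin m, (1 / (m : ℝ)) * ℓ (f i (θ' i) (xs j)) (ys j) := by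
    intro j
    have := (hconv (ys j)).map_sum_le (t := Finset.univ)
      (w := fun _ : Fin m => 1 / (m : ℝ)) (p := fun i => f i (θ' i) (xs j))
      (fun _ _ => by positivity)
      (by simp)
      (fun _ _ => Set.mem_univ _)
    simpa [Finset.smul_sum, smul_eq_mul] using this
  calc (1 / (N : ℝ)) * ∑ j : Fin N,
        ℓ ((1 / (m : ℝ)) • ∑ i : Fin m, f i (θ' i) (xs j)) (ys j)
      ≤ (1 / (N : ℝ)) * ∑ j : Fin N, ∑ i : Fin m,
          (1 / (m : ℝ)) * ℓ (f i (θ' i) (xs j)) (ys j) := by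
        rw [mul_le_mul_iff_right₀ (by positivity)]
        exact Finset.sum_le_sum fun j _ => hjensen j
    _ = (1 / (m : ℝ)) * ∑ i : Fin m,
          (1 / (N : ℝ)) * ∑ j : Fin N, ℓ (f i (θ' i) (xs j)) (ys j) := by
        rw [Finset.sum_comm]
        simp only [Finset.mul_sum]
        exact Finset.sum_congr rfl fun i _ => Finset.sum_congr rfl fun j _ => by ring
    _ ≤ (1 / (m : ℝ)) * ∑ i : Fin m,
          sSup ((fun θi' : EuclideanSpace ℝ (Fin (d i)) =>
            (1 / (N : ℝ)) * ∑ j : Fin N, ℓ (f i θi' (xs j)) (ys j)) ''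
            Metric.closedBall (θ i) ρ) := by
        rw [mul_le_mul_iff_right₀ (by positivity)]
        exact Finset.sum_le_sum fun i _ =>
          le_csSup (hbddA i) ⟨θ' i, hcomp i, rfl⟩
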